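/- Let κ₋(s) = max{-κ(s),0} and p₋ solve p₋'' - κ₋ p₋ = 0 with p₋(0)=0, p₋'(0)=1. Then for λ > 0, ρ ≤ p₋(ρ) ≤ exp(∫₀^λ s κ₋(s) ds) · ρ for all ρ ∈ [0,λ]. -/

import Mathlib

open Set

private lemma aux_mono {f f' : ℝ → ℝ} (hf : ContinuousOn f (Set.Ici 0))
    (hd : ∀ t ∈ Set.Ioi (0:ℝ), HasDerivAt f (f' t) t)
    (h0 : ∀ t ∈ Set.Ioi (0:ℝ), 0 ≤ f' t) :
    MonotoneOn f (Set.Ici (0:ℝ)) := by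
  apply monotoneOn_of_deriv_nonneg (convex_Ici 0) hf
  · intro t ht
    rw [interior_Ici] at ht
    exact (hd t ht).differentiableAt.differentiableWithinAt
  · intro t ht
    rw [interior_Ici] at ht
    rw [(hd t ht).deriv]
    exact h0 t ht

private lemma aux_anti {f f' : ℝ → ℝ} (hf : ContinuousOn f (Set.Ici 0))
    (hd : ∀ t ∈ Set.Ioi (0:ℝ), HasDerivAt f (f' t) t)
    (h0 : ∀ t ∈ Set.Ioi (0:ℝ), f' t ≤ 0) :
    AntitoneOn f (Set.Ici (0:ℝ)) := by
  apply antitoneOn_of_deriv_nonpos (convex_Ici 0) hf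
  · intro t ht
    rw [interior_Ici] at ht
    exact (hd t ht).differentiableAt.differentiableWithinAt
  · intro t ht
    rw [interior_Ici] at ht
    rw [(hd t ht).deriv]
    exact h0 t ht

/-- if `p₋` solves `p₋'' = κ₋ p₋` with `p₋ 0 = 0`, `p₋' 0 = 1`,
where `κ₋ = max (-κ) 0`, then for `λ > 0`,
`ρ ≤ p₋(ρ) ≤ exp (∫₀^λ s κ₋(s) ds) · ρ` for all `ρ ∈ [0, λ]`. -/
theorem stmt_3 (κ p : ℝ → ℝ) (hκ : Continuous κ) (hp : ContDiff ℝ 2 p)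
    (hode : ∀ t > (0:ℝ), deriv (deriv p) t = max (-κ t) 0 * p t)
    (hp0 : p 0 = 0) (hp'0 : deriv p 0 = 1) (lam : ℝ) (hlam : 0 < lam) :
    ∀ ρ ∈ Set.Icc (0:ℝ) lam,
      ρ ≤ p ρ ∧ p ρ ≤ Real.exp (∫ s in (0:ℝ)..lam, s * max (-κ s) 0) * ρ := by
  set κm : ℝ → ℝ := fun s => max (-κ s) 0 with hκm_def
  have hκm_cont : Continuous κm := hκ.neg.max continuous_const
  have hκm_nonneg : ∀ s, 0 ≤ κm s := fun s => le_max_right _ _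
  have hpc : Continuous p := hp.continuous
  have hp1 : ContDiff ℝ (1:ℕ) (deriv p) := by
    have h2 : ContDiff ℝ ((1 + 1 : ℕ) : WithTop ℕ∞) p := by exact_mod_cast hp
    simpa using ContDiff.iterate_deriv' 1 1 h2
  have hpd : Differentiable ℝ p := hp.differentiable (by norm_num)
  have hp'diff : Differentiable ℝ (deriv p) := hp1.differentiable (by norm_num)
  have hp'cont : Continuous (deriv p) := hp'diff.continuous
  have hdp : ∀ t, HasDerivAt p (deriv p t) t := fun t => (hpd t).hasDerivAt
  have hdp' : ∀ t, HasDerivAt (deriv p) (deriv (deriv p) t) t :=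
    fun t => (hp'diff t).hasDerivAt
  -- p is positive near 0
  have hslope : Filter.Tendsto (slope p 0) (nhdsWithin 0 {(0:ℝ)}ᶜ) (nhds 1) := by
    have := (hasDerivAt_iff_tendsto_slope).mp (hp'0 ▸ hdp 0)
    exact this
  have hnear : ∀ᶠ t in nhdsWithin (0:ℝ) (Set.Ioi 0), 0 < p t := by
    have h1 : ∀ᶠ t in nhdsWithin (0:ℝ) {(0:ℝ)}ᶜ, 0 < slope p 0 t :=
      hslope.eventually (eventually_gt_nhds one_pos)
    have h2 : ∀ᶠ t in nhdsWithin (0:ℝ) (Set.Ioi 0), 0 < slope p 0 t :=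
      h1.filter_mono (nhdsWithin_mono 0 (fun t ht => ne_of_gt ht))
    filter_upwards [h2, self_mem_nhdsWithin] with t ht ht0
    have : slope p 0 t = p t / t := by
      simp [slope_def_field, hp0]
    rw [this] at ht
    have := mul_pos ht (Set.mem_Ioi.mp ht0)
    rwa [div_mul_cancel₀] at this
    exact ne_of_gt (Set.mem_Ioi.mp ht0)
  obtain ⟨δ, hδpos, hδ⟩ : ∃ δ > 0, ∀ t, 0 < t → t < δ → 0 < p t := by
    rw [eventually_nhdsWithin_iff, Metric.eventually_nhds_iff] at hnear
    obtain ⟨ε, hε, h⟩ := hnear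
    exact ⟨ε, hε, fun t ht1 ht2 => h
      (by rw [Real.dist_eq, sub_zero, abs_of_pos ht1]; exact ht2) (Set.mem_Ioi.mpr ht1)⟩
  -- p is positive on (0, ∞)
  have hppos : ∀ t, 0 < t → 0 < p t := by
    by_contra hcon
    push_neg at hcon
    obtain ⟨t₁, ht₁, hpt₁⟩ := hcon
    set C : Set ℝ := {t | δ ≤ t ∧ p t ≤ 0} with hC_def
    have hC_closed : IsClosed C :=
      (isClosed_le continuous_const continuous_id).inter (isClosed_le hpc continuous_const)
    have ht₁C : t₁ ∈ C := by
      refine ⟨?_, hpt₁⟩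
      by_contra h
      push_neg at h
      exact absurd hpt₁ (not_le.mpr (hδ t₁ ht₁ h))
    have hCne : C.Nonempty := ⟨t₁, ht₁C⟩
    have hCbdd : BddBelow C := ⟨0, fun t ht => le_trans hδpos.le ht.1⟩
    set c := sInf C with hc_def
    have hcC : c ∈ C := hC_closed.csInf_mem hCne hCbdd
    have hcpos : 0 < c := lt_of_lt_of_le hδpos hcC.1
    -- p > 0 on (0, c)
    have hpos_below : ∀ t, 0 < t → t < c → 0 < p t := by
      intro t ht htc
      by_cases h : t < δ
      · exact hδ t ht h
      · push_neg at h
        by_contra hneg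
        push_neg at hneg
        exact absurd (csInf_le hCbdd ⟨h, hneg⟩) (not_le.mpr htc)
    -- deriv p monotone on [0, c]
    have hmono : MonotoneOn (deriv p) (Set.Icc 0 c) := by
      apply monotoneOn_of_deriv_nonneg (convex_Icc 0 c) hp'cont.continuousOn
        (hp'diff.differentiableOn)
      intro t ht
      rw [interior_Icc] at ht
      rw [hode t ht.1]
      exact mul_nonneg (hκm_nonneg t) (hpos_below t ht.1 ht.2).le
    have hp'ge : ∀ t ∈ Set.Icc (0:ℝ) c, 1 ≤ deriv p t := by
      intro t ht
      have := hmono ⟨le_refl 0, hcpos.le⟩ ht ht.1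
      rwa [hp'0] at this
    have hsm : StrictMonoOn p (Set.Icc 0 c) := by
      apply strictMonoOn_of_deriv_pos (convex_Icc 0 c) hpc.continuousOn
      intro t ht
      rw [interior_Icc] at ht
      exact lt_of_lt_of_le one_pos (hp'ge t ⟨ht.1.le, ht.2.le⟩)
    have : p 0 < p c := hsm ⟨le_refl 0, hcpos.le⟩ ⟨hcpos.le, le_refl c⟩ hcpos
    rw [hp0] at this
    exact absurd hcC.2 (not_le.mpr this)
  -- deriv p ≥ 1 on [0, ∞)
  have hmono_p' : MonotoneOn (deriv p) (Set.Ici 0) := by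
    apply aux_mono hp'cont.continuousOn (fun t _ => hdp' t)
    intro t ht
    rw [hode t ht]
    exact mul_nonneg (hκm_nonneg t) (hppos t ht).le
  have hp'ge1 : ∀ t, 0 ≤ t → 1 ≤ deriv p t := by
    intro t ht
    have := hmono_p' (Set.self_mem_Ici) ht ht
    rwa [hp'0] at this
  -- lower bound: ρ ≤ p ρ
  have hlower : ∀ t, 0 ≤ t → t ≤ p t := by
    intro t ht
    have hg : MonotoneOn (fun t => p t - t) (Set.Ici 0) := by
      apply aux_mono ((hpc.sub continuous_id).continuousOn)
        (fun t _ => (hdp t).sub (hasDerivAt_id t))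
      intro t ht'
      exact sub_nonneg.mpr (hp'ge1 t (le_of_lt ht'))
    have := hg Set.self_mem_Ici ht ht
    simp only [hp0, sub_zero] at this
    linarith
  -- the integral functions
  set W : ℝ → ℝ := fun ρ => ∫ s in (0:ℝ)..ρ, κm s * p s with hW_def
  have hWd : ∀ t, HasDerivAt W (κm t * p t) t :=
    fun t => ((hκm_cont.mul hpc).integral_hasStrictDerivAt 0 t).hasDerivAt
  have hW0 : W 0 = 0 := intervalIntegral.integral_same
  have hWc : Continuous W := continuous_iff_continuousAt.mpr (fun t => (hWd t).continuousAt)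
  set M : ℝ → ℝ := fun ρ => ∫ s in (0:ℝ)..ρ, s * κm s with hM_def
  have hMd : ∀ t, HasDerivAt M (t * κm t) t :=
    fun t => ((continuous_id.mul hκm_cont).integral_hasStrictDerivAt 0 t).hasDerivAt
  have hM0 : M 0 = 0 := intervalIntegral.integral_same
  have hMc : Continuous M := continuous_iff_continuousAt.mpr (fun t => (hMd t).continuousAt)
  -- deriv p = 1 + W on [0, ∞)
  have hDW : ∀ t ∈ Set.Ici (0:ℝ), deriv p t = 1 + W t := by
    have hcD : ContinuousOn (fun t => deriv p t - (1 + W t)) (Set.Ici 0) :=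
      (hp'cont.sub (continuous_const.add hWc)).continuousOn
    have hdD : ∀ t ∈ Set.Ioi (0:ℝ),
        HasDerivAt (fun t => deriv p t - (1 + W t)) (deriv (deriv p) t - κm t * p t) t :=
      fun t _ => by have h := (hdp' t).sub ((hasDerivAt_const t 1).add (hWd t)); rw [zero_add] at h; exact h
    have h1 : MonotoneOn (fun t => deriv p t - (1 + W t)) (Set.Ici 0) := by
      apply aux_mono hcD hdD
      intro t ht
      rw [hode t ht]
      simp [hκm_def]
    have h2 : AntitoneOn (fun t => deriv p t - (1 + W t)) (Set.Ici 0) := by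
      apply aux_anti hcD hdD
      intro t ht
      rw [hode t ht]
      simp [hκm_def]
    intro t ht
    have ha := h1 Set.self_mem_Ici ht (Set.mem_Ici.mp ht)
    have hb := h2 Set.self_mem_Ici ht (Set.mem_Ici.mp ht)
    simp only [hp'0, hW0, add_zero, sub_self] at ha hb
    linarith [ha, hb]
  -- p ρ ≤ ρ * (1 + W ρ)
  have hH : ∀ t, 0 ≤ t → p t ≤ t * (1 + W t) := by
    intro t ht
    have hmH : MonotoneOn (fun t => t * (1 + W t) - p t) (Set.Ici 0) := by
      apply aux_mono
      · exact ((continuous_id.mul (continuous_const.add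
          hWc)).sub hpc).continuousOn
      · intro t _
        exact (((hasDerivAt_id t).mul ((hasDerivAt_const t 1).add (hWd t))).sub (hdp t))
      · intro t ht'
        have h1 := hDW t (Set.mem_Ici.mpr (le_of_lt ht'))
        have h2 : 0 ≤ t * (κm t * p t) :=
          mul_nonneg (le_of_lt ht') (mul_nonneg (hκm_nonneg t) (hppos t ht').le)
        simp only [id_eq, zero_add, one_mul, h1, Pi.add_apply]
        linarith
    have := hmH Set.self_mem_Ici ht ht
    simp only [hp0, hW0, add_zero, zero_mul, sub_zero] at this
    linarith
  -- Grönwall: 1 + W ρ ≤ exp (M ρ)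
  have hGron : ∀ t, 0 ≤ t → 1 + W t ≤ Real.exp (M t) := by
    intro t ht
    have hG : AntitoneOn (fun t => (1 + W t) * Real.exp (-M t)) (Set.Ici 0) := by
      apply aux_anti
      · exact ((continuous_const.add hWc).mul
          (hMc.neg.rexp)).continuousOn
      · intro t _
        exact ((hasDerivAt_const t 1).add (hWd t)).mul (((hMd t).neg).exp)
      · intro t ht'
        have key : κm t * p t ≤ (1 + W t) * (t * κm t) := by
          have h1 : κm t * p t ≤ κm t * (t * (1 + W t)) :=
            mul_le_mul_of_nonneg_left (hH t (le_of_lt ht')) (hκm_nonneg t)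
          calc κm t * p t ≤ κm t * (t * (1 + W t)) := h1
            _ = (1 + W t) * (t * κm t) := by ring
        have hexp : (0:ℝ) < Real.exp (-M t) := Real.exp_pos _
        have hkey2 := mul_le_mul_of_nonneg_right key hexp.le
        simp only [zero_add, Pi.add_apply, Pi.neg_apply]
        nlinarith [hkey2]
    have := hG Set.self_mem_Ici ht ht
    simp only [hW0, hM0, add_zero, neg_zero, Real.exp_zero, mul_one] at this
    rw [Real.exp_neg] at this
    rw [mul_inv_le_iff₀ (Real.exp_pos _)] at this
    linarith [this]
  -- M is monotone below lam
  have hMmono : ∀ ρ, 0 ≤ ρ → ρ ≤ lam → M ρ ≤ M lam := by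
    intro ρ h0ρ hρlam
    have hint1 : IntervalIntegrable (fun s => s * κm s) MeasureTheory.volume 0 ρ :=
      (continuous_id.mul hκm_cont).intervalIntegrable _ _
    have hint2 : IntervalIntegrable (fun s => s * κm s) MeasureTheory.volume ρ lam :=
      (continuous_id.mul hκm_cont).intervalIntegrable _ _
    have hadd : M ρ + (∫ s in ρ..lam, s * κm s) = M lam :=
      intervalIntegral.integral_add_adjacent_intervals hint1 hint2
    have hnn : 0 ≤ ∫ s in ρ..lam, s * κm s := by
      apply intervalIntegral.integral_nonneg hρlam
      intro s hs
      exact mul_nonneg (le_trans h0ρ hs.1) (hκm_nonneg s)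
    linarith
  -- conclusion
  intro ρ hρ
  obtain ⟨h0ρ, hρlam⟩ := hρ
  refine ⟨hlower ρ h0ρ, ?_⟩
  have h1 : p ρ ≤ ρ * (1 + W ρ) := hH ρ h0ρ
  have h2 : ρ * (1 + W ρ) ≤ ρ * Real.exp (M ρ) :=
    mul_le_mul_of_nonneg_left (hGron ρ h0ρ) h0ρ
  have h3 : ρ * Real.exp (M ρ) ≤ ρ * Real.exp (M lam) :=
    mul_le_mul_of_nonneg_left (Real.exp_le_exp.mpr (hMmono ρ h0ρ hρlam)) h0ρ
  have hMeq : (∫ s in (0:ℝ)..lam, s * max (-κ s) 0) = M lam := rfl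
  rw [hMeq]
  linarith [h1, h2, h3]
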